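/- For all integers n ≥ 1 and k ≥ 1 and every polynomial P ∈ P_{n,k} (i.e., P(x) = x^{n+1}R(x) with R a real polynomial of degree at most k−1), one has (1/6)·(n/k)^{1/2}·V_0^1(P) ≤ sup_{x∈[0,1]} |P′(x)|·√(1−x²), where V_0^1(P) = ∫_0^1 |P′(x)| dx. -/

import Mathlib

open Polynomial Real

open MeasureTheory intervalIntegral
theorem chebT_natDegree_le (m : ℕ) : (Chebyshev.T ℝ (m:ℤ)).natDegree ≤ m := by
  induction m using Nat.twoStepInduction with
  | zero => simp [Chebyshev.T_zero]
  | one => simp [Chebyshev.T_one]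
  | more m ih1 ih2 =>
    have h : (Chebyshev.T ℝ (((m+2:ℕ)):ℤ)) = 2 * X * Chebyshev.T ℝ (((m+1:ℕ)):ℤ)
        - Chebyshev.T ℝ (m:ℤ) := by
      have := Chebyshev.T_add_two ℝ (m:ℤ)
      push_cast
      push_cast at this
      convert this using 2 <;> ring_nf
    rw [h]
    refine (natDegree_sub_le _ _).trans (max_le ?_ (ih1.trans (by omega)))
    refine (natDegree_mul_le).trans ?_
    have h2 : (2 * X : ℝ[X]).natDegree ≤ 1 := (natDegree_mul_le).trans (by simp)
    omega


theorem chebT_eval_ge_one {x : ℝ} (hx : 1 ≤ x) (m : ℕ) :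
    1 ≤ (Chebyshev.T ℝ (m:ℤ)).eval x ∧
      (Chebyshev.T ℝ (m:ℤ)).eval x ≤ (Chebyshev.T ℝ ((m:ℤ)+1)).eval x := by
  induction m with
  | zero => simpa [Chebyshev.T_zero, Chebyshev.T_one] using hx
  | succ m ih =>
    obtain ⟨h1, h2⟩ := ih
    have key : (Chebyshev.T ℝ ((m:ℤ)+2)).eval x
        = 2 * x * (Chebyshev.T ℝ ((m:ℤ)+1)).eval x - (Chebyshev.T ℝ (m:ℤ)).eval x := by
      rw [Chebyshev.T_add_two]; simp
    have hm1 : 1 ≤ (Chebyshev.T ℝ ((m:ℤ)+1)).eval x := le_trans h1 h2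
    have e1 : ((m+1:ℕ):ℤ) = (m:ℤ)+1 := by push_cast; ring
    have e2 : (m:ℤ)+1+1 = (m:ℤ)+2 := by ring
    rw [e1, e2, key]
    exact ⟨hm1, by nlinarith⟩

theorem chebT_eval_le {x : ℝ} (hx : 1 ≤ x) (m : ℕ) :
    (Chebyshev.T ℝ (m:ℤ)).eval x ≤ (2*x)^m ∧
      (Chebyshev.T ℝ ((m:ℤ)+1)).eval x ≤ (2*x)^(m+1) := by
  induction m with
  | zero =>
    simp [Chebyshev.T_zero, Chebyshev.T_one]
    nlinarith
  | succ m ih =>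
    obtain ⟨h1, h2⟩ := ih
    have key : (Chebyshev.T ℝ ((m:ℤ)+2)).eval x
        = 2 * x * (Chebyshev.T ℝ ((m:ℤ)+1)).eval x - (Chebyshev.T ℝ (m:ℤ)).eval x := by
      rw [Chebyshev.T_add_two]; simp
    have hT1 := (chebT_eval_ge_one hx m).1
    have e1 : ((m+1:ℕ):ℤ) = (m:ℤ)+1 := by push_cast; ring
    have e2 : (m:ℤ)+1+1 = (m:ℤ)+2 := by ring
    rw [e1, e2, key]
    refine ⟨h2, ?_⟩
    have hp : (0:ℝ) < 2*x := by linarith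
    have : 2 * x * (Chebyshev.T ℝ ((m:ℤ)+1)).eval x ≤ 2*x*(2*x)^(m+1) :=
      mul_le_mul_of_nonneg_left h2 (by linarith)
    calc 2 * x * (Chebyshev.T ℝ ((m:ℤ)+1)).eval x - (Chebyshev.T ℝ (m:ℤ)).eval x
        ≤ 2*x*(2*x)^(m+1) - 1 := by linarith
      _ ≤ (2*x)^(m+1+1) := by
          have hps : (2*x)^(m+1+1) = (2*x)^(m+1) * (2*x) := pow_succ _ _
          nlinarith [pow_pos hp (m+1)]

set_option maxHeartbeats 2000000 in
theorem cheb_compare_aux {q : ℝ[X]} {m : ℕ} (hm : 1 ≤ m) (hq : q.natDegree ≤ m)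
    {a b y s : ℝ} (hy : y < a) (hab : a < b) (hs : ∀ t ∈ Set.Icc a b, |q.eval t| ≤ s)
    (hcon : s * (Chebyshev.T ℝ (m:ℤ)).eval (1 + 2*(a-y)/(b-a)) < q.eval y) : False := by
  set L : ℝ := b - a with hLdef
  have hL : 0 < L := by simp [hLdef]; linarith
  set ξ : ℝ := 1 + 2*(a-y)/L with hξdef
  have hξ : 1 < ξ := by
    have : 0 < 2*(a-y)/L := div_pos (by linarith) hL
    simp only [hξdef]; linarith
  set Cy : ℝ := (Chebyshev.T ℝ (m:ℤ)).eval ξ with hCydef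
  have hCy1 : 1 ≤ Cy := (chebT_eval_ge_one hξ.le m).1
  have hCy0 : 0 < Cy := lt_of_lt_of_le one_pos hCy1
  have hs0 : 0 ≤ s := le_trans (abs_nonneg _) (hs a ⟨le_refl a, hab.le⟩)
  set lam : ℝ := q.eval y / Cy with hlamdef
  have hlam : s < lam := by
    rw [hlamdef, lt_div_iff₀ hCy0]; exact hcon
  have hlam0 : 0 < lam := lt_of_le_of_lt hs0 hlam
  -- the comparison polynomial
  set φp : ℝ[X] := C ((a+b)/L) - C (2/L) * X with hφdef
  have hφeval : ∀ t : ℝ, φp.eval t = (a + b - 2*t)/L := by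
    intro t; simp [hφdef]; ring
  set Cp : ℝ[X] := (Chebyshev.T ℝ (m:ℤ)).comp φp with hCpdef
  set g : ℝ[X] := C lam * Cp - q with hgdef
  -- degree bound
  have hφdeg : φp.natDegree ≤ 1 := by
    refine (natDegree_sub_le _ _).trans (max_le (by simp) ?_)
    exact (natDegree_mul_le).trans (by simp)
  have hTdeg : (Chebyshev.T ℝ (m:ℤ)).natDegree ≤ m := chebT_natDegree_le m
  have hCpdeg : Cp.natDegree ≤ m := by
    refine (natDegree_comp_le).trans ?_
    calc (Chebyshev.T ℝ (m:ℤ)).natDegree * φp.natDegree ≤ m * 1 :=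
      Nat.mul_le_mul hTdeg hφdeg
    _ = m := by ring
  have hgdeg : g.natDegree ≤ m := by
    refine (natDegree_sub_le _ _).trans (max_le ?_ hq)
    exact (natDegree_mul_le).trans (by simpa using hCpdeg)
  -- nodes
  have hm0 : (m:ℝ) ≠ 0 := by positivity
  set node : ℕ → ℝ := fun j => (a + b - Real.cos (j*π/m) * L)/2 with hnodedef
  have hnode_mem : ∀ j, node j ∈ Set.Icc a b := by
    intro j
    have h1 : Real.cos (j*π/m) ≤ 1 := Real.cos_le_one _
    have h2 : -1 ≤ Real.cos (j*π/m) := Real.neg_one_le_cos _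
    constructor
    · simp only [hnodedef, hLdef]; nlinarith
    · simp only [hnodedef, hLdef]; nlinarith
  have hφnode : ∀ j : ℕ, φp.eval (node j) = Real.cos (j*π/m) := by
    intro j
    rw [hφeval]
    simp only [hnodedef]
    field_simp; ring
  have hCpnode : ∀ j : ℕ, Cp.eval (node j) = (-1)^j := by
    intro j
    rw [hCpdef, eval_comp, hφnode, Chebyshev.T_real_cos]
    have : ((m:ℤ):ℝ) * (j*π/m) = j * π := by push_cast; field_simp
    rw [this]
    have h2 := Real.cos_nat_mul_pi_sub 0 j
    simpa using h2
  have hnode0 : node 0 = a := by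
    simp only [hnodedef, hLdef, Nat.cast_zero, zero_mul, zero_div, Real.cos_zero, one_mul]
    ring
  have hnode_mono : ∀ i j : ℕ, i < j → j ≤ m → node i < node j := by
    intro i j hij hjm
    have hθi : (i:ℝ)*π/m ∈ Set.Icc 0 π := by
      constructor
      · positivity
      · rw [div_le_iff₀ (by positivity)]
        have : (i:ℝ) ≤ m := by exact_mod_cast le_trans hij.le hjm
        nlinarith [Real.pi_pos]
    have hθj : (j:ℝ)*π/m ∈ Set.Icc 0 π := by
      constructor
      · positivity
      · rw [div_le_iff₀ (by positivity)]
        have : (j:ℝ) ≤ m := by exact_mod_cast hjm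
        nlinarith [Real.pi_pos]
    have hlt : (i:ℝ)*π/m < (j:ℝ)*π/m := by
      have h1 : (i:ℝ) < j := by exact_mod_cast hij
      have hπ := Real.pi_pos
      have hmm : (0:ℝ) < m := by positivity
      exact div_lt_div_of_pos_right (by nlinarith) hmm
    have hcc := Real.strictAntiOn_cos hθi hθj hlt
    have h2 : Real.cos ((j:ℝ)*π/m) * L < Real.cos ((i:ℝ)*π/m) * L :=
      mul_lt_mul_of_pos_right hcc hL
    simp only [hnodedef]
    linarith
  -- values of g at the nodes
  have hgnode : ∀ j : ℕ, g.eval (node j) = lam * (-1)^j - q.eval (node j) := by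
    intro j; simp [hgdef, hCpnode j]
  have habs : ∀ j : ℕ, |q.eval (node j)| ≤ s := fun j => hs _ (hnode_mem j)
  have hposn : ∀ j : ℕ, Even j → 0 < g.eval (node j) := by
    intro j hj
    rw [hgnode j, hj.neg_one_pow]
    have h2 := (abs_le.mp (habs j)).2
    linarith
  have hnegn : ∀ j : ℕ, Odd j → g.eval (node j) < 0 := by
    intro j hj
    rw [hgnode j, hj.neg_one_pow]
    have h2 := (abs_le.mp (habs j)).1
    linarith
  -- roots between consecutive nodes
  have hroot : ∀ j, j < m → ∃ z ∈ Set.Ioo (node j) (node (j+1)), g.eval z = 0 := by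
    intro j hj
    have hmono := hnode_mono j (j+1) (Nat.lt_succ_self j) (by omega)
    rcases Nat.even_or_odd j with hpar | hpar
    · have h1 := hposn j hpar
      have h2 := hnegn (j+1) (Even.add_one hpar)
      have hmem := intermediate_value_Ioo' hmono.le (g.continuous.continuousOn)
          (show (0:ℝ) ∈ Set.Ioo (g.eval (node (j+1))) (g.eval (node j)) from ⟨h2, h1⟩)
      obtain ⟨z, hz, hz0⟩ := hmem
      exact ⟨z, hz, hz0⟩
    · have h1 := hnegn j hpar
      have h2 := hposn (j+1) (Odd.add_one hpar)
      have hmem := intermediate_value_Ioo hmono.le (g.continuous.continuousOn)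
          (show (0:ℝ) ∈ Set.Ioo (g.eval (node j)) (g.eval (node (j+1))) from ⟨h1, h2⟩)
      obtain ⟨z, hz, hz0⟩ := hmem
      exact ⟨z, hz, hz0⟩
  choose zfun hzmem hzval using hroot
  set F : ℕ → ℝ := fun j => if h : 0 < j ∧ j ≤ m then zfun (j-1) (by omega) else y with hFdef
  have hF0 : F 0 = y := by simp [hFdef]
  have hFj : ∀ j, 0 < j → j ≤ m →
      node (j-1) < F j ∧ F j < node j ∧ g.eval (F j) = 0 := by
    intro j h1 h2
    have hdd : (0 < j ∧ j ≤ m) := ⟨h1, h2⟩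
    have hlt : j - 1 < m := by omega
    have hmem := hzmem (j-1) hlt
    have hval := hzval (j-1) hlt
    have hj1 : j - 1 + 1 = j := by omega
    rw [hj1] at hmem
    simp only [hFdef, dif_pos hdd]
    exact ⟨hmem.1, hmem.2, hval⟩
  have hnode_mono' : ∀ i j, i ≤ j → j ≤ m → node i ≤ node j := by
    intro i j hij hjm
    rcases eq_or_lt_of_le hij with rfl | h
    · exact le_refl _
    · exact (hnode_mono i j h hjm).le
  have hForder : ∀ i j, i < j → j ≤ m → F i < F j := by
    intro i j hij hjm
    have hj1 : 0 < j := by omega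
    obtain ⟨hji1, hji2, _⟩ := hFj j hj1 hjm
    rcases Nat.eq_zero_or_pos i with rfl | hi
    · rw [hF0]
      have hle : node 0 ≤ node (j-1) := hnode_mono' 0 (j-1) (by omega) (by omega)
      rw [hnode0] at hle
      linarith
    · obtain ⟨_, hi2, _⟩ := hFj i hi (by omega)
      have hle : node i ≤ node (j-1) := hnode_mono' i (j-1) (by omega) (by omega)
      linarith
  have hinj : Set.InjOn F (Finset.range (m+1) : Finset ℕ) := by
    intro i hi j hj hEq
    simp only [Finset.coe_range, Set.mem_Iio] at hi hj
    rcases lt_trichotomy i j with h | h | h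
    · exact absurd hEq (ne_of_lt (hForder i j h (by omega)))
    · exact h
    · exact absurd hEq.symm (ne_of_lt (hForder j i h (by omega)))
  have hcard : ((Finset.range (m+1)).image F).card = m+1 := by
    rw [Finset.card_image_of_injOn hinj, Finset.card_range]
  have hφy : φp.eval y = ξ := by
    rw [hφeval]
    rw [hξdef]
    field_simp
    ring
  have hroots0 : ∀ x ∈ (Finset.range (m+1)).image F, g.eval x = 0 := by
    intro x hx
    obtain ⟨j, hj, rfl⟩ := Finset.mem_image.mp hx
    have hjm : j ≤ m := by
      have := Finset.mem_range.mp hj; omega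
    rcases Nat.eq_zero_or_pos j with rfl | hjpos
    · rw [hF0]
      have hCpy : Cp.eval y = Cy := by
        rw [hCpdef, eval_comp, hφy, hCydef]
      simp only [hgdef, eval_sub, eval_mul, eval_C, hCpy]
      rw [hlamdef]
      field_simp; ring
    · exact (hFj j hjpos hjm).2.2
  have hg0 : g = 0 :=
    eq_zero_of_natDegree_lt_card_of_eval_eq_zero' g _ hroots0 (by rw [hcard]; omega)
  have hcontra := hposn 0 Even.zero
  rw [hg0] at hcontra
  simp at hcontra

theorem cheb_compare {q : ℝ[X]} {m : ℕ} (hq : q.natDegree ≤ m) {a b y s : ℝ}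
    (hy : y < a) (hab : a < b) (hs : ∀ t ∈ Set.Icc a b, |q.eval t| ≤ s) :
    |q.eval y| ≤ s * (2 * (1 + 2*(a-y)/(b-a)))^m := by
  have hs0 : 0 ≤ s := le_trans (abs_nonneg _) (hs a ⟨le_refl a, hab.le⟩)
  have hξ1 : 1 ≤ 1 + 2*(a-y)/(b-a) := by
    have : 0 ≤ 2*(a-y)/(b-a) := by
      apply div_nonneg <;> linarith
    linarith
  rcases Nat.eq_zero_or_pos m with rfl | hm
  · have h0 : q.natDegree = 0 := Nat.le_zero.mp hq
    obtain ⟨c, rfl⟩ := Polynomial.natDegree_eq_zero.mp h0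
    simpa using hs a ⟨le_refl a, hab.le⟩
  · by_contra hcontra
    push_neg at hcontra
    have hT : (Chebyshev.T ℝ (m:ℤ)).eval (1 + 2*(a-y)/(b-a))
        ≤ (2 * (1 + 2*(a-y)/(b-a)))^m := (chebT_eval_le hξ1 m).1
    have hkey : s * (Chebyshev.T ℝ (m:ℤ)).eval (1 + 2*(a-y)/(b-a)) < |q.eval y| :=
      lt_of_le_of_lt (mul_le_mul_of_nonneg_left hT hs0) hcontra
    rcases abs_cases (q.eval y) with ⟨he, _⟩ | ⟨he, _⟩
    · exact cheb_compare_aux hm hq hy hab hs (he ▸ hkey)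
    · refine cheb_compare_aux (q := -q) hm (by simpa using hq) hy hab
        (fun t ht => by simpa using hs t ht) ?_
      rw [eval_neg]
      rw [he] at hkey
      linarith

theorem tail_bound {f : ℝ → ℝ} (hf : Continuous f) {M δ : ℝ} (hδ0 : 0 < δ) (hδ1 : δ ≤ 1)
    (hbd : ∀ x, 1-δ ≤ x → x < 1 → f x * Real.sqrt ((2-δ)*(1-x)) ≤ M) :
    ∫ x in (1-δ)..1, f x ≤ 2*M*Real.sqrt δ / Real.sqrt (2-δ) := by
  have hc0 : (0:ℝ) < 2 - δ := by linarith
  set c : ℝ := Real.sqrt (2-δ) with hcdef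
  have hc : 0 < c := Real.sqrt_pos.mpr hc0
  set G : ℝ → ℝ := fun t => (2*M/c) * (Real.sqrt δ - Real.sqrt (1-t)) with hGdef
  set F : ℝ → ℝ := fun t => ∫ x in (1-δ)..t, f x with hFdef
  have hFderiv : ∀ t : ℝ, HasDerivAt F (f t) t := by
    intro t
    exact intervalIntegral.integral_hasDerivAt_right (hf.intervalIntegrable _ _)
      hf.aestronglyMeasurable.stronglyMeasurableAtFilter hf.continuousAt
  have hGderiv : ∀ t ∈ Set.Ioo (1-δ) (1:ℝ), HasDerivAt G (2*M/c * (1/(2*Real.sqrt (1-t)))) t := by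
    intro t ht
    have h1t : (0:ℝ) < 1 - t := by linarith [ht.2]
    have hsq : HasDerivAt (fun t : ℝ => Real.sqrt (1-t)) (1/(2*Real.sqrt (1-t)) * (-1)) t := by
      have hinner : HasDerivAt (fun t : ℝ => 1 - t) (-1) t := by
        simpa using (hasDerivAt_id t).const_sub 1
      exact (Real.hasDerivAt_sqrt (ne_of_gt h1t)).comp t hinner
    have : HasDerivAt (fun t => Real.sqrt δ - Real.sqrt (1-t))
        (-(1/(2*Real.sqrt (1-t)) * (-1))) t := hsq.const_sub _
    have h2 := this.const_mul (2*M/c)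
    refine h2.congr_deriv ?_
    ring
  set H : ℝ → ℝ := fun t => G t - F t with hHdef
  have hHcont : ContinuousOn H (Set.Icc (1-δ) 1) := by
    apply ContinuousOn.sub
    · apply Continuous.continuousOn
      exact (continuous_const.mul (continuous_const.sub
        ((continuous_const.sub continuous_id).sqrt)))
    · exact fun t _ => ((hFderiv t).differentiableAt.continuousAt).continuousWithinAt
  have hmono : MonotoneOn H (Set.Icc (1-δ) 1) := by
    apply monotoneOn_of_deriv_nonneg (convex_Icc _ _) hHcont
    · intro t ht
      rw [interior_Icc] at ht
      exact ((hGderiv t ht).sub (hFderiv t)).differentiableAt.differentiableWithinAt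
    · intro t ht
      rw [interior_Icc] at ht
      have hD := (hGderiv t ht).sub (hFderiv t)
      rw [show deriv H t = 2*M/c * (1/(2*Real.sqrt (1-t))) - f t from hD.deriv]
      have h1t : (0:ℝ) < 1 - t := by linarith [ht.2]
      have hs1t : 0 < Real.sqrt (1-t) := Real.sqrt_pos.mpr h1t
      have hfb := hbd t (le_of_lt ht.1) ht.2
      rw [Real.sqrt_mul (le_of_lt hc0)] at hfb
      -- f t * (c * sqrt (1-t)) ≤ M
      have : f t ≤ M / (c * Real.sqrt (1-t)) := by
        rw [le_div_iff₀ (by positivity)]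
        linarith [hfb]
      have hle : f t ≤ 2*M/c * (1/(2*Real.sqrt (1-t))) := by
        calc f t ≤ M / (c * Real.sqrt (1-t)) := this
        _ = 2*M/c * (1/(2*Real.sqrt (1-t))) := by
          field_simp
      linarith
  have hend := hmono (Set.left_mem_Icc.mpr (by linarith)) (Set.right_mem_Icc.mpr (by linarith))
    (by linarith)
  have hH1 : H (1-δ) = 0 := by
    simp only [hHdef, hGdef, hFdef]
    rw [intervalIntegral.integral_same]
    have : (1:ℝ) - (1-δ) = δ := by ring
    rw [this]
    ring
  rw [hH1] at hend
  simp only [hHdef, hGdef, hFdef] at hend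
  rw [sub_self, Real.sqrt_zero] at hend
  have : F 1 ≤ 2*M/c * Real.sqrt δ := by
    simp only [hFdef] at *
    linarith [hend]
  simp only [hFdef] at this
  calc ∫ x in (1-δ)..1, f x ≤ 2*M/c*Real.sqrt δ := this
    _ = 2*M*Real.sqrt δ / c := by ring

theorem main_bound {f : ℝ → ℝ} (hf : Continuous f) {B r t0 : ℝ} (hr : 0 < r)
    (ht0 : 0 ≤ t0) (hB : 0 ≤ B)
    (hbd : ∀ x ∈ Set.Icc (0:ℝ) t0, f x ≤ B * Real.exp (r*(x-1))) :
    ∫ x in (0:ℝ)..t0, f x ≤ B/r * Real.exp (r*(t0-1)) := by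
  have hce : Continuous fun x : ℝ => B * Real.exp (r*(x-1)) := by
    apply continuous_const.mul
    exact (Real.continuous_exp.comp (continuous_const.mul (continuous_id.sub continuous_const)))
  have hint : ∫ x in (0:ℝ)..t0, B * Real.exp (r*(x-1))
      = B/r * Real.exp (r*(t0-1)) - B/r * Real.exp (r*(0-1)) := by
    have hA : ∀ x ∈ Set.uIcc (0:ℝ) t0, HasDerivAt (fun x => B/r * Real.exp (r*(x-1)))
        (B * Real.exp (r*(x-1))) x := by
      intro x _
      have h1 : HasDerivAt (fun x : ℝ => r*(x-1)) r x := by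
        simpa using ((hasDerivAt_id x).sub_const 1).const_mul r
      have h2 := (Real.hasDerivAt_exp (r*(x-1))).comp x h1
      have h3 := h2.const_mul (B/r)
      refine h3.congr_deriv ?_
      field_simp
    exact intervalIntegral.integral_eq_sub_of_hasDerivAt hA (hce.intervalIntegrable _ _)
  have hmono := intervalIntegral.integral_mono_on (μ := volume) ht0 (hf.intervalIntegrable _ _)
    (hce.intervalIntegrable _ _) hbd
  rw [hint] at hmono
  have : 0 ≤ B/r * Real.exp (r*(0-1)) := by positivity
  linarith

-- derivative structure
theorem deriv_struct (n : ℕ) (R : ℝ[X]) :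
    derivative (X^(n+1) * R) = X^n * (C ((n:ℝ)+1) * R + X * derivative R) := by
  rw [derivative_mul, derivative_X_pow, Nat.add_sub_cancel]
  push_cast
  ring

theorem Sdeg {k : ℕ} (hk : 1 ≤ k) {R : ℝ[X]} (hR : R.natDegree ≤ k - 1) (c : ℝ) :
    (C c * R + X * derivative R).natDegree ≤ k - 1 := by
  refine (natDegree_add_le _ _).trans (max_le ?_ ?_)
  · exact (natDegree_mul_le).trans (by simpa using hR)
  · rcases Nat.eq_zero_or_pos R.natDegree with h0 | hpos
    · obtain ⟨a, rfl⟩ := Polynomial.natDegree_eq_zero.mp h0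
      simp
    · refine (natDegree_mul_le).trans ?_
      have := Polynomial.natDegree_derivative_le R
      simp only [natDegree_X]
      omega

theorem pointwise_decay {S : ℝ[X]} {m n : ℕ} (hSdeg : S.natDegree ≤ m) {M : ℝ}
    (hM : ∀ t ∈ Set.Icc (0:ℝ) 1, t^n * |S.eval t| * Real.sqrt (1-t^2) ≤ M)
    {x : ℝ} (hx0 : 0 ≤ x) (hx1 : x < 1) :
    x^n * |S.eval x| ≤ (2*M*10^m / Real.sqrt (1-x)) * Real.exp (-((n:ℝ)*(1-x))/2) := by
  set u : ℝ := 1 - x with hudef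
  have hu0 : 0 < u := by simp only [hudef]; linarith
  have hu1 : u ≤ 1 := by simp only [hudef]; linarith
  set a : ℝ := 1 - u/2 with hadef
  set b : ℝ := 1 - u/4 with hbdef
  have ha2 : 1/2 ≤ a := by simp only [hadef]; linarith
  have ha0 : 0 < a := lt_of_lt_of_le (by norm_num) ha2
  have hb1 : b < 1 := by simp only [hbdef]; linarith
  have hya : x < a := by simp only [hadef, hudef]; linarith
  have hab : a < b := by simp only [hadef, hbdef]; linarith
  have han : (0:ℝ) < a^n := pow_pos ha0 n
  have hsu : 0 < Real.sqrt u := Real.sqrt_pos.mpr hu0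
  have hM0 : 0 ≤ M := by
    refine le_trans ?_ (hM 0 ⟨le_refl 0, zero_le_one⟩)
    positivity
  set s : ℝ := 2*M / (a^n * Real.sqrt u) with hsdef
  have h14 : Real.sqrt (u/4) = Real.sqrt u / 2 := by
    rw [show u/4 = u * (1/2)^2 by ring, Real.sqrt_mul hu0.le,
      Real.sqrt_sq (by norm_num : (0:ℝ) ≤ 1/2)]
    ring
  have hs : ∀ t ∈ Set.Icc a b, |S.eval t| ≤ s := by
    rintro t ⟨hta, htb⟩
    have ht0 : 0 ≤ t := by linarith
    have ht1 : t ≤ 1 := by linarith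
    have key := hM t ⟨ht0, ht1⟩
    have htn : a^n ≤ t^n := pow_le_pow_left₀ ha0.le hta n
    have hsq1 : Real.sqrt (u/4) ≤ Real.sqrt (1-t) := by
      apply Real.sqrt_le_sqrt
      simp only [hbdef] at htb
      linarith
    have hsq2 : Real.sqrt (1-t) ≤ Real.sqrt (1-t^2) := by
      apply Real.sqrt_le_sqrt
      nlinarith
    have hchain : a^n * (Real.sqrt u / 2) ≤ t^n * Real.sqrt (1-t^2) := by
      rw [← h14]
      have h1 : (0:ℝ) ≤ Real.sqrt (u/4) := Real.sqrt_nonneg _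
      nlinarith [Real.sqrt_nonneg (1-t^2)]
    rw [hsdef, le_div_iff₀ (by positivity)]
    have habs : 0 ≤ |S.eval t| := abs_nonneg _
    nlinarith
  have hcomp := cheb_compare hSdeg hya hab hs
  have hξ : 1 + 2*(a-x)/(b-a) = 5 := by
    have h1 : a - x = u/2 := by simp only [hadef, hudef]; ring
    have h2 : b - a = u/4 := by simp only [hadef, hbdef]; ring
    rw [h1, h2]
    field_simp
    ring
  rw [hξ] at hcomp
  norm_num at hcomp
  -- hcomp : |S.eval x| ≤ s * 10^m
  have hxa : (x/a)^n ≤ Real.exp (-((n:ℝ)*u)/2) := by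
    have step1 : x/a ≤ 1 - u/2 := by
      rw [div_le_iff₀ ha0]
      simp only [hudef, hadef]
      nlinarith
    have step2 : 1 - u/2 ≤ Real.exp (-(u/2)) := by
      have := Real.add_one_le_exp (-(u/2))
      linarith
    have hda : 0 ≤ x/a := div_nonneg hx0 ha0.le
    calc (x/a)^n ≤ (Real.exp (-(u/2)))^n :=
        pow_le_pow_left₀ hda (le_trans step1 step2) n
      _ = Real.exp ((n:ℝ) * (-(u/2))) := (Real.exp_nat_mul _ n).symm
      _ = Real.exp (-((n:ℝ)*u)/2) := by ring_nf
  have hfinal : x^n * |S.eval x| ≤ (2*M*10^m / Real.sqrt u) * Real.exp (-((n:ℝ)*u)/2) := by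
    have hxn : 0 ≤ x^n := pow_nonneg hx0 n
    have h1 : x^n * |S.eval x| ≤ x^n * (s * 10^m) :=
      mul_le_mul_of_nonneg_left hcomp hxn
    have h2 : x^n * (s * 10^m) = (2*M*10^m / Real.sqrt u) * (x/a)^n := by
      rw [hsdef, div_pow]
      field_simp
    have h3 : (2*M*10^m / Real.sqrt u) * (x/a)^n
        ≤ (2*M*10^m / Real.sqrt u) * Real.exp (-((n:ℝ)*u)/2) := by
      apply mul_le_mul_of_nonneg_left hxa
      positivity
    linarith
  simpa [hudef] using hfinal


set_option maxHeartbeats 2000000 in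
/-- For all integers `n ≥ 1`, `k ≥ 1` and every `P ∈ 𝒫_{n,k}`, we have
`(1/6) (n/k)^(1/2) V_0^1(P) ≤ sup_{x ∈ [0,1]} |P'(x)| √(1-x²)`. -/
theorem stmt_2 (n k : ℕ) (hn : 1 ≤ n) (hk : 1 ≤ k)
    (P R : Polynomial ℝ) (hR : R.natDegree ≤ k - 1)
    (hP : P = X ^ (n + 1) * R) :
    (1 / 6) * Real.sqrt ((n : ℝ) / (k : ℝ)) *
        (∫ x in (0:ℝ)..1, |(Polynomial.derivative P).eval x|) ≤
      ⨆ x : Set.Icc (0:ℝ) 1,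
        |(Polynomial.derivative P).eval (x : ℝ)| * Real.sqrt (1 - (x : ℝ) ^ 2) := by
  classical
  set f : ℝ → ℝ := fun t => |(Polynomial.derivative P).eval t| with hfdef
  set g : ℝ → ℝ := fun t => |(Polynomial.derivative P).eval t| * Real.sqrt (1 - t ^ 2) with hgdef
  have hfc : Continuous f := (P.derivative.continuous_aeval).abs
  have hfpos : ∀ x, 0 ≤ f x := fun x => abs_nonneg _
  have hgc : Continuous g :=
    (P.derivative.continuous_aeval).abs.mul ((continuous_const.sub (continuous_pow 2)).sqrt)
  have hbdd : BddAbove (Set.range fun x : Set.Icc (0:ℝ) 1 => g (x:ℝ)) := by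
    have h1 : (Set.range fun x : Set.Icc (0:ℝ) 1 => g (x:ℝ)) = g '' Set.Icc 0 1 := by
      ext z
      constructor
      · rintro ⟨⟨x, hx⟩, rfl⟩; exact ⟨x, hx, rfl⟩
      · rintro ⟨x, hx, rfl⟩; exact ⟨⟨x, hx⟩, rfl⟩
    rw [h1]
    exact (isCompact_Icc.image hgc).bddAbove
  set M : ℝ := ⨆ x : Set.Icc (0:ℝ) 1, g (x:ℝ) with hMdef
  have hMx : ∀ x ∈ Set.Icc (0:ℝ) 1, g x ≤ M := by
    intro x hx
    exact le_ciSup hbdd ⟨x, hx⟩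
  have hM0 : 0 ≤ M := by
    refine le_trans ?_ (hMx 1 ⟨by norm_num, le_refl 1⟩)
    simp only [hgdef]
    positivity
  -- structure of the derivative
  set S : ℝ[X] := C ((n:ℝ)+1) * R + X * Polynomial.derivative R with hSdef
  have hPd : Polynomial.derivative P = X^n * S := by rw [hP]; exact deriv_struct n R
  have hfeval : ∀ t : ℝ, 0 ≤ t → f t = t^n * |S.eval t| := by
    intro t ht
    simp only [hfdef, hPd, eval_mul, eval_pow, eval_X, abs_mul, abs_pow, abs_of_nonneg ht]
  have hSdeg : S.natDegree ≤ k - 1 := Sdeg hk hR _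
  have hMS : ∀ t ∈ Set.Icc (0:ℝ) 1, t^n * |S.eval t| * Real.sqrt (1-t^2) ≤ M := by
    intro t ht
    rw [← hfeval t ht.1]
    exact hMx t ht
  have htailptw : ∀ δ : ℝ, 0 < δ → δ ≤ 1 →
      ∀ x, 1-δ ≤ x → x < 1 → f x * Real.sqrt ((2-δ)*(1-x)) ≤ M := by
    intro δ h1 h2 x hx1 hx2
    have hx0 : 0 ≤ x := by linarith
    have hg := hMx x ⟨hx0, hx2.le⟩
    have hle : (2-δ)*(1-x) ≤ 1 - x^2 := by nlinarith
    have hsq := Real.sqrt_le_sqrt hle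
    calc f x * Real.sqrt ((2-δ)*(1-x)) ≤ f x * Real.sqrt (1-x^2) :=
          mul_le_mul_of_nonneg_left hsq (hfpos x)
      _ ≤ M := hg
  have hnR : (0:ℝ) < n := by exact_mod_cast hn
  have hkR : (0:ℝ) < k := by exact_mod_cast hk
  have hVnn : 0 ≤ ∫ x in (0:ℝ)..1, f x :=
    intervalIntegral.integral_nonneg (by norm_num) (fun x _ => hfpos x)
  by_cases hcase : (n:ℝ) ≤ 9*k
  · -- easy case : n ≤ 9k
    have hsnk : Real.sqrt ((n:ℝ)/k) ≤ 3 := by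
      have h9 : (n:ℝ)/k ≤ 9 := by
        rw [div_le_iff₀ hkR]; linarith
      calc Real.sqrt ((n:ℝ)/k) ≤ Real.sqrt 9 := Real.sqrt_le_sqrt h9
        _ = 3 := by rw [show (9:ℝ) = 3^2 by norm_num, Real.sqrt_sq (by norm_num)]
    have hVle : (∫ x in (0:ℝ)..1, f x) ≤ 3 * M * Real.sqrt (1/3) := by
      have hsplit : (∫ x in (0:ℝ)..1, f x)
          = (∫ x in (0:ℝ)..(1/2:ℝ), f x) + ∫ x in (1/2:ℝ)..1, f x :=
        (intervalIntegral.integral_add_adjacent_intervals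
          (hfc.intervalIntegrable _ _) (hfc.intervalIntegrable _ _)).symm
      have hmain : (∫ x in (0:ℝ)..(1/2:ℝ), f x) ≤ M * Real.sqrt (1/3) := by
        have hptw : ∀ x ∈ Set.Icc (0:ℝ) (1/2:ℝ), f x ≤ 2 * M * Real.sqrt (1/3) := by
          rintro x ⟨h1, h2⟩
          have hg := hMx x ⟨h1, by linarith⟩
          have hsq : Real.sqrt (3/4) ≤ Real.sqrt (1-x^2) := by
            apply Real.sqrt_le_sqrt; nlinarith
          have hkey : f x * Real.sqrt (3/4) ≤ M :=
            le_trans (mul_le_mul_of_nonneg_left hsq (hfpos x)) hg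
          have hid : Real.sqrt (3/4) * Real.sqrt (1/3) = 1/2 := by
            rw [← Real.sqrt_mul (by norm_num : (0:ℝ) ≤ 3/4)]
            rw [show (3/4:ℝ) * (1/3) = (1/2)^2 by norm_num, Real.sqrt_sq (by norm_num)]
          have h13 : 0 ≤ Real.sqrt (1/3) := Real.sqrt_nonneg _
          nlinarith [mul_le_mul_of_nonneg_right hkey h13, hfpos x]
        have := intervalIntegral.integral_mono_on (μ := volume) (by norm_num)
          (hfc.intervalIntegrable _ _) (intervalIntegrable_const) hptw
        rw [intervalIntegral.integral_const, smul_eq_mul] at this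
        calc (∫ x in (0:ℝ)..(1/2:ℝ), f x) ≤ (1/2 - 0) * (2 * M * Real.sqrt (1/3)) := this
          _ = M * Real.sqrt (1/3) := by ring
      have htail : (∫ x in (1/2:ℝ)..1, f x) ≤ 2 * M * Real.sqrt (1/3) := by
        have h12 : (1:ℝ) - (1/2:ℝ) = 1/2 := by norm_num
        have := tail_bound hfc (by norm_num : (0:ℝ) < 1/2) (by norm_num)
          (htailptw (1/2) (by norm_num) (by norm_num))
        rw [h12] at this
        have hdiv : Real.sqrt (1/2) / Real.sqrt (2 - 1/2) = Real.sqrt (1/3) := by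
          rw [← Real.sqrt_div (by norm_num : (0:ℝ) ≤ 1/2)]
          norm_num
        calc (∫ x in (1/2:ℝ)..1, f x) ≤ 2*M*Real.sqrt (1/2)/Real.sqrt (2-1/2) := this
          _ = 2*M*(Real.sqrt (1/2)/Real.sqrt (2-1/2)) := by ring
          _ = 2*M*Real.sqrt (1/3) := by rw [hdiv]
      rw [hsplit]
      linarith
    have h13le : Real.sqrt (1/3) ≤ 2/3 := by
      calc Real.sqrt (1/3) ≤ Real.sqrt (4/9) := Real.sqrt_le_sqrt (by norm_num)
        _ = 2/3 := by rw [show (4/9:ℝ) = (2/3)^2 by norm_num, Real.sqrt_sq (by norm_num)]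
    have hfin : (1/6) * Real.sqrt ((n:ℝ)/k) * (∫ x in (0:ℝ)..1, f x) ≤ M := by
      have h1 : (1/6) * Real.sqrt ((n:ℝ)/k) * (∫ x in (0:ℝ)..1, f x)
          ≤ (1/6) * 3 * (∫ x in (0:ℝ)..1, f x) := by
        have := mul_le_mul_of_nonneg_right hsnk hVnn
        nlinarith [Real.sqrt_nonneg ((n:ℝ)/k)]
      have h2 : (1/6) * 3 * (∫ x in (0:ℝ)..1, f x) ≤ (1/2) * (3 * M * Real.sqrt (1/3)) := by
        nlinarith
      have h3 : (1/2) * (3 * M * Real.sqrt (1/3)) ≤ (1/2) * (3 * M * (2/3)) := by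
        nlinarith
      nlinarith
    exact hfin
  · -- hard case : n > 9k
    push_neg at hcase
    set δ : ℝ := 6*k/n with hδdef
    have hδ0 : 0 < δ := by positivity
    have hδ23 : δ < 2/3 := by
      rw [hδdef, div_lt_iff₀ hnR]; nlinarith
    have hδ1 : δ ≤ 1 := by linarith
    have hnδ : (n:ℝ) * δ = 6*k := by
      rw [hδdef]; field_simp
    have hsδ : 0 < Real.sqrt δ := Real.sqrt_pos.mpr hδ0
    -- split the integral
    have hsplit : (∫ x in (0:ℝ)..1, f x)
        = (∫ x in (0:ℝ)..(1-δ), f x) + ∫ x in (1-δ)..1, f x :=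
      (intervalIntegral.integral_add_adjacent_intervals
        (hfc.intervalIntegrable _ _) (hfc.intervalIntegrable _ _)).symm
    -- tail bound
    have htail : (∫ x in (1-δ)..1, f x) ≤ 2*M*Real.sqrt δ/Real.sqrt (2-δ) :=
      tail_bound hfc hδ0 hδ1 (htailptw δ hδ0 hδ1)
    -- main bound
    set B : ℝ := 2*M*10^(k-1)/Real.sqrt δ with hBdef
    have hB0 : 0 ≤ B := by positivity
    have hmain : (∫ x in (0:ℝ)..(1-δ), f x) ≤ B/((n:ℝ)/2) * Real.exp (((n:ℝ)/2)*((1-δ)-1)) := by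
      apply main_bound hfc (by positivity) (by linarith) hB0
      rintro x ⟨hx0, hx1⟩
      have hxlt : x < 1 := by linarith
      have hpd := pointwise_decay hSdeg hMS hx0 hxlt
      rw [← hfeval x hx0] at hpd
      have hss : Real.sqrt δ ≤ Real.sqrt (1-x) := Real.sqrt_le_sqrt (by linarith)
      have hnum : (0:ℝ) ≤ 2*M*10^(k-1) := by positivity
      have hfrac : 2*M*10^(k-1) / Real.sqrt (1-x) ≤ B := by
        rw [hBdef]
        apply div_le_div_of_nonneg_left hnum hsδ hss
      have hexp : Real.exp (-((n:ℝ)*(1-x))/2) = Real.exp (((n:ℝ)/2)*(x-1)) := by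
        congr 1; ring
      calc f x ≤ (2*M*10^(k-1) / Real.sqrt (1-x)) * Real.exp (-((n:ℝ)*(1-x))/2) := hpd
        _ ≤ B * Real.exp (-((n:ℝ)*(1-x))/2) :=
            mul_le_mul_of_nonneg_right hfrac (Real.exp_pos _).le
        _ = B * Real.exp (((n:ℝ)/2)*(x-1)) := by rw [hexp]
    -- simplify the main bound
    have hmexp : Real.exp (((n:ℝ)/2)*((1-δ)-1)) = Real.exp (-(3:ℝ)*k) := by
      congr 1
      have : ((n:ℝ)/2)*((1-δ)-1) = -((n:ℝ)*δ)/2 := by ring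
      rw [this, hnδ]; ring
    rw [hmexp] at hmain
    -- numeric facts
    have hsnksδ : Real.sqrt ((n:ℝ)/k) * Real.sqrt δ = Real.sqrt 6 := by
      rw [← Real.sqrt_mul (by positivity)]
      congr 1
      rw [hδdef]; field_simp
    have h6le : Real.sqrt 6 ≤ 2.45 := by
      calc Real.sqrt 6 ≤ Real.sqrt (2.45^2) := Real.sqrt_le_sqrt (by norm_num)
        _ = 2.45 := Real.sqrt_sq (by norm_num)
    have hs2δ : (1.15:ℝ) ≤ Real.sqrt (2-δ) := by
      have : ((1.15:ℝ))^2 ≤ 2-δ := by nlinarith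
      calc (1.15:ℝ) = Real.sqrt (1.15^2) := (Real.sqrt_sq (by norm_num)).symm
        _ ≤ Real.sqrt (2-δ) := Real.sqrt_le_sqrt this
    have hs2δ0 : (0:ℝ) < Real.sqrt (2-δ) := by linarith
    have hsnk0 : 0 ≤ Real.sqrt ((n:ℝ)/k) := Real.sqrt_nonneg _
    -- bound for the tail contribution
    have htailc : Real.sqrt ((n:ℝ)/k) * (2*M*Real.sqrt δ/Real.sqrt (2-δ)) ≤ (4.9/1.15)*M := by
      have heq : Real.sqrt ((n:ℝ)/k) * (2*M*Real.sqrt δ/Real.sqrt (2-δ))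
          = 2*M*Real.sqrt 6/Real.sqrt (2-δ) := by
        rw [← hsnksδ]; ring
      rw [heq]
      have h1 : 2*M*Real.sqrt 6 ≤ 2*M*2.45 := by nlinarith
      calc 2*M*Real.sqrt 6/Real.sqrt (2-δ) ≤ (2*M*2.45)/1.15 :=
          div_le_div₀ (by nlinarith) h1 (by norm_num) hs2δ
        _ = (4.9/1.15)*M := by ring
    -- bound for the main contribution
    have hpow : (10:ℝ)^(k-1) * Real.exp (-(3:ℝ)*k) ≤ 1/20 := by
      have h20 : (20:ℝ) ≤ Real.exp 3 := by
        have h1 := Real.exp_one_gt_d9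
        have h3 : Real.exp (3:ℝ) = (Real.exp 1)^3 := by
          rw [show (3:ℝ) = (3:ℕ)*(1:ℝ) by norm_num, Real.exp_nat_mul]
        have hcube : (2.7182818283:ℝ)^3 < (Real.exp 1)^3 := by
          apply pow_lt_pow_left₀ h1 (by norm_num)
          norm_num
        rw [h3]
        nlinarith [hcube]
      have he3 : Real.exp (-(3:ℝ)) ≤ 1/20 := by
        rw [Real.exp_neg, inv_eq_one_div]
        apply div_le_div_of_nonneg_left (by norm_num) (by norm_num) h20
      have hek : Real.exp (-(3:ℝ)*k) = (Real.exp (-3))^k := by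
        rw [show (-(3:ℝ)*k) = (k:ℕ)*(-3:ℝ) by push_cast; ring, Real.exp_nat_mul]
      rw [hek]
      have hkk : k - 1 + 1 = k := by omega
      have h10 : (10:ℝ)^k = 10^(k-1)*10 := by
        conv_lhs => rw [← hkk]
        rw [pow_succ]
      have h10k : (10:ℝ)^(k-1) * (Real.exp (-3))^k
          = (1/10) * (10 * Real.exp (-3))^k := by
        rw [mul_pow, h10]
        ring
      rw [h10k]
      have hbase : (0:ℝ) ≤ 10 * Real.exp (-3) := by positivity
      have hbase2 : 10 * Real.exp (-3) ≤ 1/2 := by nlinarith [he3]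
      have h12k : (10 * Real.exp (-3))^k ≤ (1/2)^k := pow_le_pow_left₀ hbase hbase2 k
      have h12k2 : ((1:ℝ)/2)^k ≤ (1/2)^1 := by
        apply pow_le_pow_of_le_one (by norm_num) (by norm_num) hk
      nlinarith [h12k, h12k2]
    have hE0 : (0:ℝ) < Real.exp (-(3:ℝ)*k) := Real.exp_pos _
    have hAeq : Real.sqrt ((n:ℝ)/k) = Real.sqrt 6 / Real.sqrt δ := by
      rw [eq_div_iff (ne_of_gt hsδ)]
      exact hsnksδ
    have hmainc : Real.sqrt ((n:ℝ)/k) * (B/((n:ℝ)/2) * Real.exp (-(3:ℝ)*k)) ≤ (0.3:ℝ)*M := by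
      have key : Real.sqrt ((n:ℝ)/k) * (B/((n:ℝ)/2) * Real.exp (-(3:ℝ)*k))
          = 2*M*10^(k-1)*Real.exp (-(3:ℝ)*k)*Real.sqrt ((n:ℝ)/k)/(Real.sqrt δ*((n:ℝ)/2)) := by
        rw [hBdef]
        field_simp
      rw [key, div_le_iff₀ (by positivity)]
      rw [hAeq]
      apply le_of_mul_le_mul_right ?_ hsδ
      have hδδ : Real.sqrt δ * Real.sqrt δ = δ := Real.mul_self_sqrt hδ0.le
      have hL : 2*M*10^(k-1)*Real.exp (-(3:ℝ)*k)*(Real.sqrt 6/Real.sqrt δ)*Real.sqrt δ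
          = 2*M*(10^(k-1)*Real.exp (-(3:ℝ)*k))*Real.sqrt 6 := by
        field_simp
      have hR2 : (0.3:ℝ)*M*(Real.sqrt δ*((n:ℝ)/2))*Real.sqrt δ = (0.3:ℝ)*M*((n:ℝ)*δ)/2 := by
        rw [show (0.3:ℝ)*M*(Real.sqrt δ*((n:ℝ)/2))*Real.sqrt δ
          = (0.3:ℝ)*M*((n:ℝ)/2)*(Real.sqrt δ*Real.sqrt δ) from by ring, hδδ]
        ring
      rw [hL, hR2, hnδ]
      have hk1 : (1:ℝ) ≤ k := by exact_mod_cast hk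
      have hterm : (0:ℝ) ≤ 10^(k-1)*Real.exp (-(3:ℝ)*k) := by positivity
      nlinarith [hpow, h6le, hM0, hk1, Real.sqrt_nonneg (6:ℝ),
        mul_le_mul_of_nonneg_left hpow (mul_nonneg (by norm_num : (0:ℝ) ≤ 2) hM0)]
    -- combine
    have hVle : (∫ x in (0:ℝ)..1, f x)
        ≤ B/((n:ℝ)/2)*Real.exp (-(3:ℝ)*k) + 2*M*Real.sqrt δ/Real.sqrt (2-δ) := by
      rw [hsplit]; linarith [hmain, htail]
    have h1 := mul_le_mul_of_nonneg_left hVle hsnk0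
    rw [mul_add] at h1
    have h2 : Real.sqrt ((n:ℝ)/k) * (∫ x in (0:ℝ)..1, f x) ≤ (0.3:ℝ)*M + (4.9/1.15)*M := by
      linarith [hmainc, htailc]
    have hgoal : (1/6)*Real.sqrt ((n:ℝ)/k)*(∫ x in (0:ℝ)..1, f x)
        = (1/6)*(Real.sqrt ((n:ℝ)/k)*(∫ x in (0:ℝ)..1, f x)) := by ring
    calc (1/6)*Real.sqrt ((n:ℝ)/k)*(∫ x in (0:ℝ)..1, f x)
        = (1/6)*(Real.sqrt ((n:ℝ)/k)*(∫ x in (0:ℝ)..1, f x)) := hgoal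
      _ ≤ (1/6)*((0.3:ℝ)*M + (4.9/1.15)*M) := by linarith [h2]
      _ ≤ M := by nlinarith [hM0]
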